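/- Let w > 0, m ∈ ℝ, a < b, Λ(x) = exp(w(xm − x²/2)), Z = ∫_a^b Λ(x) dx, and μ = m + (Λ(a) − Λ(b))/(Zw). Then (1/Z)∫_a^b (x − μ)² Λ(x) dx = 1/w + [Λ(a)(a − m) − Λ(b)(b − m)]/(Zw) − [(Λ(a) − Λ(b))/(Zw)]². -/

import Mathlib

theorem uniform_prior_posterior_variance (w m a b : ℝ) (hw : 0 < w) (hab : a < b)
    (Λ : ℝ → ℝ) (hΛ : ∀ x, Λ x = Real.exp (w * (x * m - x ^ 2 / 2)))
    (Z μ : ℝ) (hZ : Z = ∫ x in a..b, Λ x)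
    (hμ : μ = m + (Λ a - Λ b) / (Z * w)) :
    (1 / Z) * ∫ x in a..b, (x - μ) ^ 2 * Λ x =
      1 / w + (Λ a * (a - m) - Λ b * (b - m)) / (Z * w) -
        ((Λ a - Λ b) / (Z * w)) ^ 2 := by
  have hΛfun : Λ = fun x => Real.exp (w * (x * m - x ^ 2 / 2)) := funext hΛ
  subst hΛfun
  set Λ : ℝ → ℝ := fun x => Real.exp (w * (x * m - x ^ 2 / 2)) with hΛdef
  have hΛcont : Continuous Λ := by
    apply Real.continuous_exp.comp
    continuity
  have hΛpos : ∀ x, 0 < Λ x := fun x => Real.exp_pos _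
  -- derivative of Λ
  have hE : ∀ x : ℝ, HasDerivAt Λ (Λ x * (w * (m - x))) x := by
    intro x
    have h1 : HasDerivAt (fun x : ℝ => w * (x * m - x ^ 2 / 2)) (w * (m - x)) x := by
      have hx : HasDerivAt (fun x : ℝ => x * m - x ^ 2 / 2) (m - x) x := by
        have := ((hasDerivAt_id x).mul_const m).sub ((hasDerivAt_pow 2 x).div_const 2)
        refine this.congr_deriv ?_
        ring
      simpa using hx.const_mul w
    exact h1.exp
  -- antiderivative G for (x-μ)^2 Λ x - ((μ-m)^2 + 1/w) Λ x
  set G : ℝ → ℝ := fun x => (-(1 / w) * (x - μ) + (μ - m) / w) * Λ x with hGdef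
  have hG : ∀ x : ℝ, HasDerivAt G
      ((x - μ) ^ 2 * Λ x - ((μ - m) ^ 2 + 1 / w) * Λ x) x := by
    intro x
    have hlin : HasDerivAt (fun x : ℝ => -(1 / w) * (x - μ) + (μ - m) / w) (-(1 / w)) x := by
      simpa using (((hasDerivAt_id x).sub_const μ).const_mul (-(1 / w))).add_const ((μ - m) / w)
    have := hlin.mul (hE x)
    refine this.congr_deriv ?_
    have hΛne : Λ x ≠ 0 := (hΛpos x).ne'
    field_simp
    ring
  have hintΛ : IntervalIntegrable Λ MeasureTheory.volume a b :=
    hΛcont.intervalIntegrable a b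
  have hintsq : IntervalIntegrable (fun x => (x - μ) ^ 2 * Λ x) MeasureTheory.volume a b := by
    exact (Continuous.mul (by continuity) hΛcont).intervalIntegrable a b
  have key : ∫ x in a..b, ((x - μ) ^ 2 * Λ x - ((μ - m) ^ 2 + 1 / w) * Λ x) = G b - G a := by
    apply intervalIntegral.integral_eq_sub_of_hasDerivAt
    · intro x _; exact hG x
    · exact ((Continuous.mul (by continuity) hΛcont).sub
        (continuous_const.mul hΛcont)).intervalIntegrable a b
  have hsplit : ∫ x in a..b, ((x - μ) ^ 2 * Λ x - ((μ - m) ^ 2 + 1 / w) * Λ x)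
      = (∫ x in a..b, (x - μ) ^ 2 * Λ x) - ((μ - m) ^ 2 + 1 / w) * Z := by
    rw [intervalIntegral.integral_sub (g := fun x => ((μ - m) ^ 2 + 1 / w) * Λ x) hintsq
      ((continuous_const.mul hΛcont).intervalIntegrable a b),
      intervalIntegral.integral_const_mul, hZ]
  have hI : ∫ x in a..b, (x - μ) ^ 2 * Λ x = G b - G a + ((μ - m) ^ 2 + 1 / w) * Z := by
    rw [← key, hsplit]; ring
  have hZpos : 0 < Z := by
    rw [hZ]
    exact intervalIntegral.intervalIntegral_pos_of_pos hintΛ hΛpos hab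
  have hZne : Z ≠ 0 := hZpos.ne'
  have hwne : w ≠ 0 := hw.ne'
  -- relate Λ a, Λ b to μ via hμ : μ = m + (Λ a - Λ b)/(Z w)
  have hμ' : (μ - m) * (Z * w) = Λ a - Λ b := by
    rw [hμ]; field_simp; ring
  rw [hI, hGdef]
  simp only
  rw [hμ] at hμ' ⊢
  field_simp
  ring
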